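/- Let B > 0 and w > 0 be real numbers, and define the 2×2 real matrix S := [[(e^{B}−1)(e^{2B}−1)² / (B e^{B} (e^{3B}−1)) · w^{−1}, −e^{B}(e^{B}−1)/(e^{3B}−1)], [−e^{B}(e^{B}−1)/(e^{3B}−1), B e^{2B} / ((e^{B}−1)(e^{3B}−1)) · w]]. Then S is symmetric and positive definite, and det S = e^{B}(e^{B}−1)/(e^{3B}−1) > 0. -/

import Mathlib

open Real Matrix

private lemma det_aux (x b ww : ℝ) (hx : 1 < x) (hb : 0 < b) (hww : 0 < ww) :
    (x - 1) * (x ^ 2 - 1) ^ 2 / (b * x * (x ^ 3 - 1)) * ww⁻¹ *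
      (b * x ^ 2 / ((x - 1) * (x ^ 3 - 1)) * ww) - (-(x * (x - 1) / (x ^ 3 - 1))) ^ 2 =
    x * (x - 1) / (x ^ 3 - 1) := by
  have h1 : x - 1 ≠ 0 := by linarith
  have h3 : x ^ 3 - 1 ≠ 0 := by nlinarith [sq_nonneg x, sq_nonneg (x-1)]
  have hb' : b ≠ 0 := ne_of_gt hb
  have hw' : ww ≠ 0 := ne_of_gt hww
  have hx0 : x ≠ 0 := by positivity
  field_simp
  ring

private lemma quad_pos_aux (a b d v0 v1 : ℝ) (ha : 0 < a) (hd : 0 < a * d - b ^ 2)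
    (hv : v0 ≠ 0 ∨ v1 ≠ 0) : 0 < a * v0 ^ 2 + 2 * b * v0 * v1 + d * v1 ^ 2 := by
  rcases eq_or_ne v1 0 with h1 | h1
  · subst h1
    rcases hv with h0 | h0
    · have : 0 < v0 ^ 2 := by positivity
      nlinarith
    · exact absurd rfl h0
  · have h2 : 0 < v1 ^ 2 := by positivity
    nlinarith [sq_nonneg (a * v0 + b * v1)]

theorem limit_covariance_matrix_S_posdef
    (B w : ℝ) (hB : 0 < B) (hw : 0 < w) :
    let S : Matrix (Fin 2) (Fin 2) ℝ :=
      !![(Real.exp B - 1) * (Real.exp (2 * B) - 1) ^ 2 /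
           (B * Real.exp B * (Real.exp (3 * B) - 1)) * w⁻¹,
         -(Real.exp B * (Real.exp B - 1) / (Real.exp (3 * B) - 1));
         -(Real.exp B * (Real.exp B - 1) / (Real.exp (3 * B) - 1)),
         B * Real.exp (2 * B) / ((Real.exp B - 1) * (Real.exp (3 * B) - 1)) * w]
    S.IsSymm ∧ S.PosDef ∧
      S.det = Real.exp B * (Real.exp B - 1) / (Real.exp (3 * B) - 1) ∧
      0 < S.det := by
  intro S
  have he1 : 0 < Real.exp B - 1 := by
    have := Real.one_lt_exp_iff.2 hB; linarith
  have he2 : 0 < Real.exp (2 * B) - 1 := by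
    have := Real.one_lt_exp_iff.2 (by linarith : 0 < 2 * B); linarith
  have he3 : 0 < Real.exp (3 * B) - 1 := by
    have := Real.one_lt_exp_iff.2 (by linarith : 0 < 3 * B); linarith
  have hep : 0 < Real.exp B := Real.exp_pos B
  have h2eq : Real.exp (2 * B) = Real.exp B ^ 2 := by
    rw [show (2 : ℝ) * B = B + B by ring, Real.exp_add]; ring
  have h3eq : Real.exp (3 * B) = Real.exp B ^ 3 := by
    rw [show (3 : ℝ) * B = B + B + B by ring, Real.exp_add, Real.exp_add]; ring
  -- entries
  have ha : 0 < (Real.exp B - 1) * (Real.exp (2 * B) - 1) ^ 2 /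
      (B * Real.exp B * (Real.exp (3 * B) - 1)) * w⁻¹ :=
    mul_pos (div_pos (mul_pos he1 (pow_pos he2 2))
      (mul_pos (mul_pos hB hep) he3)) (inv_pos.2 hw)
  have hd : 0 < B * Real.exp (2 * B) / ((Real.exp B - 1) * (Real.exp (3 * B) - 1)) * w :=
    mul_pos (div_pos (mul_pos hB (Real.exp_pos _)) (mul_pos he1 he3)) hw
  have hdet : (Real.exp B - 1) * (Real.exp (2 * B) - 1) ^ 2 /
        (B * Real.exp B * (Real.exp (3 * B) - 1)) * w⁻¹ *
        (B * Real.exp (2 * B) / ((Real.exp B - 1) * (Real.exp (3 * B) - 1)) * w) -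
        (-(Real.exp B * (Real.exp B - 1) / (Real.exp (3 * B) - 1))) ^ 2 =
      Real.exp B * (Real.exp B - 1) / (Real.exp (3 * B) - 1) := by
    rw [h2eq, h3eq]
    exact det_aux _ _ _ (by linarith) hB hw
  have hSdet : S.det = Real.exp B * (Real.exp B - 1) / (Real.exp (3 * B) - 1) := by
    rw [show S.det = _ from Matrix.det_fin_two_of _ _ _ _]
    linear_combination hdet
  have hSymm : S.IsSymm := by
    rw [Matrix.IsSymm]
    ext i j
    fin_cases i <;> fin_cases j <;> rfl
  refine ⟨hSymm, ⟨?_, ?_⟩, hSdet, ?_⟩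
  · rw [Matrix.IsHermitian, Matrix.conjTranspose_eq_transpose_of_trivial]
    exact hSymm
  · intro v hv
    have hv' : v 0 ≠ 0 ∨ v 1 ≠ 0 := by
      by_contra h
      push_neg at h
      exact hv (Finsupp.ext fun i => by fin_cases i <;> simp [h.1, h.2])
    have key := quad_pos_aux _ (-(Real.exp B * (Real.exp B - 1) / (Real.exp (3 * B) - 1))) _
      (v 0) (v 1) ha (by rw [hdet]; exact div_pos (mul_pos hep he1) he3) hv'
    simp [S, dotProduct, Matrix.mulVec, Finsupp.sum_fintype, Fin.sum_univ_two]
    nlinarith [key]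
  · rw [hSdet]
    exact div_pos (mul_pos hep he1) he3
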